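/- Let r_0 > 0, let φ : [r_0, ∞) → [0, ∞) be measurable, and suppose there is a constant c ≥ 0 such that ∫_{r_0}^{x} 1_E(t) φ(t) dt ≤ c · q(x) · x for all x ≥ r_0, where E ⊆ [0, ∞) is measurable, 1_E is its indicator, and q : (0, ∞) → [0, ∞) is increasing with q(t) ≤ t. Then for all r_0 ≤ r < R < ∞, ∫_r^R 1_E(x) φ(x)/x² dx ≤ c + 2c ∫_r^R q(x)/x² dx. -/

import Mathlib

open Real Set MeasureTheory intervalIntegral

/-- If `∫_{r₀}^x 1_E φ ≤ c q(x) x` for all `x ≥ r₀`, where `q` is increasing with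
`q(t) ≤ t`, then `∫_r^R 1_E(x) φ(x)/x² dx ≤ c + 2c ∫_r^R q(x)/x² dx` for
`r₀ ≤ r < R`. -/
theorem stmt3 (r₀ : ℝ) (hr₀ : 0 < r₀) (φ : ℝ → ℝ) (hφmeas : Measurable φ)
    (hφpos : ∀ t, r₀ ≤ t → 0 ≤ φ t)
    (E : Set ℝ) (hE : MeasurableSet E) (hE0 : E ⊆ Set.Ici 0)
    (q : ℝ → ℝ) (hqmono : MonotoneOn q (Set.Ioi 0))
    (hqpos : ∀ t, 0 < t → 0 ≤ q t) (hqle : ∀ t, 0 < t → q t ≤ t)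
    (c : ℝ) (hc : 0 ≤ c)
    (hInt : ∀ x : ℝ, IntervalIntegrable (E.indicator φ) volume r₀ x)
    (hqInt : ∀ r R : ℝ, r₀ ≤ r → r < R →
      IntervalIntegrable (fun x => q x / x ^ 2) volume r R)
    (hbound : ∀ x : ℝ, r₀ ≤ x → (∫ t in r₀..x, E.indicator φ t) ≤ c * q x * x) :
    ∀ r R : ℝ, r₀ ≤ r → r < R →
      (∫ x in r..R, E.indicator φ x / x ^ 2) ≤
        c + 2 * c * ∫ x in r..R, q x / x ^ 2 := by
  intro r R hr hrR
  have hr0 : 0 < r := lt_of_lt_of_le hr₀ hr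
  have hR0 : 0 < R := hr0.trans hrR
  set f : ℝ → ℝ := E.indicator φ with hfdef
  have hfmeas : Measurable f := hφmeas.indicator hE
  have hfpos : ∀ x, r₀ ≤ x → 0 ≤ f x := by
    intro x hx
    by_cases hxE : x ∈ E
    · simpa [hfdef, Set.indicator_of_mem hxE] using hφpos x hx
    · simp [hfdef, Set.indicator_of_notMem hxE]
  set μ : Measure ℝ := volume.restrict (Ioc r R) with hμ
  -- integrability of f on various intervals
  have hfint : ∀ b, r₀ ≤ b → IntegrableOn f (Ioc r₀ b) volume := fun b _ => (hInt b).1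
  have hfμ : Integrable f μ :=
    ((hfint R (hr.trans hrR.le)).mono_set (Ioc_subset_Ioc_left hr))
  -- the kernel K
  set K : ℝ × ℝ → ℝ :=
    ({p : ℝ × ℝ | p.1 < p.2}).indicator (fun p => (2 * f p.1) * (p.2 ^ 3)⁻¹) with hKdef
  have hginv : IntegrableOn (fun t : ℝ => (t ^ 3)⁻¹) (Ioc r R) volume := by
    apply (ContinuousOn.integrableOn_Icc ?_).mono_set Ioc_subset_Icc_self
    exact ContinuousOn.inv₀ (by fun_prop)
      (fun t ht => pow_ne_zero 3 (ne_of_gt (hr0.trans_le ht.1)))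
  have hK : Integrable K (μ.prod μ) := by
    refine Integrable.indicator ?_ (measurableSet_lt measurable_fst measurable_snd)
    exact (hfμ.const_mul 2).mul_prod hginv
  -- pointwise: K (x, ·) integrates to f x * (x⁻² - R⁻²)
  have hKx : ∀ x ∈ Ioc r R, (∫ t, K (x, t) ∂μ) =
      (2 * f x) * (((R ^ 2)⁻¹ - (x ^ 2)⁻¹) / (-2 : ℝ)) := by
    intro x hx
    have hx0 : (0:ℝ) < x := hr0.trans hx.1
    have h1 : ∀ t : ℝ, K (x, t) = (Ioi x).indicator (fun t => (2 * f x) * (t ^ 3)⁻¹) t := by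
      intro t
      by_cases h : x < t
      · simp [hKdef, Set.indicator_of_mem, h, mem_Ioi]
      · simp [hKdef, Set.indicator_of_notMem, h, mem_Ioi]
    calc (∫ t, K (x, t) ∂μ)
        = ∫ t in Ioc r R, (Ioi x).indicator (fun t => (2 * f x) * (t ^ 3)⁻¹) t := by
          simp only [hμ]; exact integral_congr_ae (Filter.Eventually.of_forall h1)
      _ = ∫ t in Ioc r R ∩ Ioi x, (2 * f x) * (t ^ 3)⁻¹ :=
          setIntegral_indicator measurableSet_Ioi
      _ = ∫ t in Ioc x R, (2 * f x) * (t ^ 3)⁻¹ := by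
          rw [Ioc_inter_Ioi, sup_eq_right.2 hx.1.le]
      _ = ∫ t in x..R, (2 * f x) * (t ^ 3)⁻¹ := (intervalIntegral.integral_of_le hx.2).symm
      _ = ∫ t in x..R, (2 * f x) * (t : ℝ) ^ (-3 : ℤ) := by
          refine intervalIntegral.integral_congr fun t _ => ?_
          have ht3 : (t:ℝ) ^ (-3 : ℤ) = (t ^ 3)⁻¹ := by
            rw [zpow_neg]; norm_cast
          rw [ht3]
      _ = (2 * f x) * ∫ t in x..R, (t : ℝ) ^ (-3 : ℤ) :=
          intervalIntegral.integral_const_mul _ _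
      _ = (2 * f x) * (((R:ℝ) ^ (-3 + 1 : ℤ) - x ^ (-3 + 1 : ℤ)) / ((-3 : ℤ) + 1)) := by
          rw [integral_zpow (by
            refine Or.inr ⟨by norm_num, fun h => ?_⟩
            rw [Set.mem_uIcc] at h
            rcases h with ⟨h1, _⟩ | ⟨h1, _⟩ <;> linarith)]
      _ = _ := by
          have hR2 : (R:ℝ) ^ (-3 + 1 : ℤ) = (R ^ 2)⁻¹ := by
            norm_num [zpow_neg]
          have hx2 : (x:ℝ) ^ (-3 + 1 : ℤ) = (x ^ 2)⁻¹ := by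
            norm_num [zpow_neg]
          rw [hR2, hx2]; norm_num
  -- pointwise decomposition of 1/x²
  have hdecomp : ∀ x ∈ Ioc r R, f x / x ^ 2 = f x / R ^ 2 + ∫ t, K (x, t) ∂μ := by
    intro x hx
    have hx0 : (0:ℝ) < x := hr0.trans hx.1
    rw [hKx x hx]
    have hxne : x ≠ 0 := ne_of_gt hx0
    have hRne : R ≠ 0 := ne_of_gt hR0
    field_simp
    ring
  -- split the integral
  have hsplit : (∫ x in r..R, f x / x ^ 2) =
      (∫ x in Ioc r R, f x / R ^ 2) + ∫ x, (∫ t, K (x, t) ∂μ) ∂μ := by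
    rw [intervalIntegral.integral_of_le hrR.le]
    rw [setIntegral_congr_fun measurableSet_Ioc hdecomp]
    rw [integral_add (hfμ.div_const _) hK.integral_prod_left]
  -- swap the double integral
  have hswap : (∫ x, (∫ t, K (x, t) ∂μ) ∂μ) = ∫ t, (∫ x, K (x, t) ∂μ) ∂μ :=
    integral_integral_swap (f := fun x t => K (x, t)) hK
  -- bound on ∫_{Ioc r b} f for r₀ ≤ r, b ≥ r₀
  have hFbound : ∀ b : ℝ, r < b → b ≤ R → (∫ x in Ioc r b, f x) ≤ c * q b * b := by
    intro b hb _
    have hb₀ : r₀ ≤ b := hr.trans hb.le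
    have h1 : (∫ x in Ioc r b, f x) ≤ ∫ x in Ioc r₀ b, f x := by
      refine setIntegral_mono_set (hfint b hb₀) ?_ (HasSubset.Subset.eventuallyLE (Ioc_subset_Ioc_left hr))
      filter_upwards [ae_restrict_mem measurableSet_Ioc] with x hx
      exact hfpos x hx.1.le
    calc (∫ x in Ioc r b, f x) ≤ ∫ x in Ioc r₀ b, f x := h1
      _ = ∫ x in r₀..b, f x := (intervalIntegral.integral_of_le hb₀).symm
      _ ≤ c * q b * b := hbound b hb₀
  -- bound the first term
  have hterm1 : (∫ x in Ioc r R, f x / R ^ 2) ≤ c := by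
    rw [MeasureTheory.integral_div]
    have h1 : (∫ x in Ioc r R, f x) ≤ c * q R * R := hFbound R hrR le_rfl
    have h2 : c * q R * R / R ^ 2 ≤ c := by
      rw [div_le_iff₀ (by positivity : (0:ℝ) < R ^ 2), pow_two]
      have hqR : q R ≤ R := hqle R hR0
      calc c * q R * R ≤ c * R * R :=
            mul_le_mul_of_nonneg_right (mul_le_mul_of_nonneg_left hqR hc) hR0.le
        _ = c * (R * R) := by ring
    calc (∫ x in Ioc r R, f x) / R ^ 2 ≤ c * q R * R / R ^ 2 := by gcongr
      _ ≤ c := h2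
  -- bound the inner integral of the second term
  have hterm2pt : ∀ t ∈ Ioc r R, (∫ x, K (x, t) ∂μ) ≤ 2 * c * (q t / t ^ 2) := by
    intro t ht
    have ht0 : (0:ℝ) < t := hr0.trans ht.1
    have h1 : ∀ x : ℝ, K (x, t) = (Iio t).indicator (fun x => (2 * f x) * (t ^ 3)⁻¹) x := by
      intro x
      by_cases h : x < t
      · simp [hKdef, Set.indicator_of_mem, h, mem_Iio]
      · simp [hKdef, Set.indicator_of_notMem, h, mem_Iio]
    have h2 : (∫ x, K (x, t) ∂μ) = ∫ x in Ioc r R ∩ Iio t, (2 * f x) * (t ^ 3)⁻¹ := by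
      rw [hμ]
      rw [integral_congr_ae (Filter.Eventually.of_forall h1)]
      exact setIntegral_indicator measurableSet_Iio
    have h3 : Ioc r R ∩ Iio t = Ioo r t := by
      ext y
      simp only [mem_inter_iff, mem_Ioc, mem_Iio, mem_Ioo]
      exact ⟨fun ⟨⟨a, _⟩, b⟩ => ⟨a, b⟩, fun ⟨a, b⟩ => ⟨⟨a, (b.le.trans ht.2)⟩, b⟩⟩
    have h4 : (∫ x, K (x, t) ∂μ) = (∫ x in Ioc r t, f x) * (2 * (t ^ 3)⁻¹) := by
      rw [h2, h3, ← integral_Ioc_eq_integral_Ioo, ← MeasureTheory.integral_mul_const]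
      refine setIntegral_congr_fun measurableSet_Ioc fun x _ => ?_
      ring
    rw [h4]
    have h5 : (∫ x in Ioc r t, f x) * (2 * (t ^ 3)⁻¹) ≤ (c * q t * t) * (2 * (t ^ 3)⁻¹) := by
      refine mul_le_mul_of_nonneg_right (hFbound t ht.1 ht.2) (by positivity)
    refine h5.trans (le_of_eq ?_)
    field_simp
  -- integrate the bound
  have hterm2 : (∫ t, (∫ x, K (x, t) ∂μ) ∂μ) ≤ ∫ t in Ioc r R, 2 * c * (q t / t ^ 2) := by
    rw [hμ]
    refine setIntegral_mono_on ?_ ?_ measurableSet_Ioc hterm2pt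
    · exact hK.integral_prod_right
    · exact ((hqInt r R hr hrR).1.const_mul (2 * c))
  have hqint' : (∫ t in Ioc r R, 2 * c * (q t / t ^ 2)) =
      2 * c * ∫ x in r..R, q x / x ^ 2 := by
    rw [intervalIntegral.integral_of_le hrR.le, MeasureTheory.integral_const_mul]
  calc (∫ x in r..R, f x / x ^ 2)
      = (∫ x in Ioc r R, f x / R ^ 2) + ∫ t, (∫ x, K (x, t) ∂μ) ∂μ := by rw [hsplit, hswap]
    _ ≤ c + 2 * c * ∫ x in r..R, q x / x ^ 2 := by
        rw [← hqint'] at *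
        exact add_le_add hterm1 hterm2
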